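/- Let n ≥ 2 be an integer not divisible by 3 and let j be a positive integer. Then the subgroup of GL(3,ℂ) generated by E, L_n and −F_{0,j} (this is the group Δ(6n², j)) has order 3·2^j·n². -/

import Mathlib

open Matrix

/-- The matrix `E` with entries `E₀₁ = E₁₂ = E₂₀ = 1` and all other entries `0`. -/
noncomputable def Ematrix : Matrix (Fin 3) (Fin 3) ℂ := !![0, 1, 0; 0, 0, 1; 1, 0, 0]

/-- The matrix `L_n = diag(1, ν, ν⁻¹)` with `ν = exp(2πi/n)`. -/
noncomputable def Lmatrix (n : ℕ) : Matrix (Fin 3) (Fin 3) ℂ :=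
  Matrix.diagonal ![1, Complex.exp (2 * (Real.pi : ℂ) * Complex.I / (n : ℂ)),
    (Complex.exp (2 * (Real.pi : ℂ) * Complex.I / (n : ℂ)))⁻¹]

/-- The matrix `F_{m,j}`, with entries `−ξ` in positions `(0,2)`, `(1,1)`, `(2,0)` and `0`
elsewhere, where `ξ = exp(2πi/(3^m·2^j))`. -/
noncomputable def Fmatrix (m j : ℕ) : Matrix (Fin 3) (Fin 3) ℂ :=
  (-(Complex.exp (2 * (Real.pi : ℂ) * Complex.I / ((3 : ℂ) ^ m * (2 : ℂ) ^ j)))) •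
    (!![0, 0, 1; 0, 1, 0; 1, 0, 0] : Matrix (Fin 3) (Fin 3) ℂ)

section Abstract

variable {G : Type*} [Group G]

/-- word normal form -/
def wrd (e l c z f : G) (k a b : ℤ) (s : Bool) (t : ℤ) : G :=
  z ^ k * l ^ a * c ^ b * (cond s f 1) * e ^ t

variable {e l c z f : G}
variable (hc : c = e * l * e⁻¹) (hec : e * c * e⁻¹ = c⁻¹ * l⁻¹)
  (hfl : f * l * f⁻¹ = c⁻¹) (hfc : f * c * f⁻¹ = l⁻¹) (hfe : f * e * f⁻¹ = e ^ 2)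
  (hz : z = f * f) (hzc : ∀ g : G, Commute z g) (hlc : Commute l c)

section
include hc
theorem wrd_el (a : ℤ) : e * l ^ a = c ^ a * e := by
  have : c ^ a = e * l ^ a * e⁻¹ := by rw [hc, _root_.conj_zpow]
  rw [this]; group
end

section
include hec hlc
theorem wrd_ec (b : ℤ) : e * c ^ b = l ^ (-b) * c ^ (-b) * e := by
  have h1 : (c⁻¹ * l⁻¹) ^ b = e * c ^ b * e⁻¹ := by rw [← hec, _root_.conj_zpow]
  have h2 : (c⁻¹ * l⁻¹) ^ b = l ^ (-b) * c ^ (-b) := by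
    rw [(hlc.inv_inv.symm).mul_zpow, _root_.zpow_neg, _root_.zpow_neg, _root_.inv_zpow, _root_.inv_zpow]
    exact ((hlc.zpow_zpow b b).inv_inv.symm).eq ▸ rfl
  rw [← h2] at *
  rw [h1]; group
end

section
include hfl
theorem wrd_fl (a : ℤ) : f * l ^ a = c ^ (-a) * f := by
  have : c ^ (-a) = (c⁻¹) ^ a := by rw [_root_.zpow_neg, _root_.inv_zpow]
  rw [this, ← hfl, _root_.conj_zpow]; group
end

section
include hfc
theorem wrd_fc (b : ℤ) : f * c ^ b = l ^ (-b) * f := by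
  have : l ^ (-b) = (l⁻¹) ^ b := by rw [_root_.zpow_neg, _root_.inv_zpow]
  rw [this, ← hfc, _root_.conj_zpow]; group
end

section
include hfe
theorem wrd_fe (t : ℤ) : f * e ^ t = e ^ (2 * t) * f := by
  have : e ^ (2 * t) = (e ^ 2) ^ t := by rw [← _root_.zpow_natCast e 2, ← _root_.zpow_mul]; norm_num [mul_comm]
  rw [this, ← hfe, _root_.conj_zpow]; group
end

end Abstract

section Abstract2
variable {G : Type*} [Group G] {e l c z f : G}
variable (hc : c = e * l * e⁻¹) (hec : e * c * e⁻¹ = c⁻¹ * l⁻¹)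
  (hfl : f * l * f⁻¹ = c⁻¹) (hfc : f * c * f⁻¹ = l⁻¹) (hfe : f * e * f⁻¹ = e ^ 2)
  (hz : z = f * f) (hzc : ∀ g : G, Commute z g) (hlc : Commute l c) (he3 : e ^ 3 = 1)

section
include hzc
theorem wrd_mulL (k a b : ℤ) (s : Bool) (t : ℤ) :
    l * wrd e l c z f k a b s t = wrd e l c z f k (a + 1) b s t := by
  unfold wrd
  have h1 : l * z ^ k = z ^ k * l := ((hzc l).zpow_left k).eq.symm
  calc l * (z ^ k * l ^ a * c ^ b * (cond s f 1) * e ^ t)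
      = (l * z ^ k) * (l ^ a * c ^ b * (cond s f 1) * e ^ t) := by group
    _ = (z ^ k * l) * (l ^ a * c ^ b * (cond s f 1) * e ^ t) := by rw [h1]
    _ = z ^ k * l ^ (a + 1) * c ^ b * (cond s f 1) * e ^ t := by
        rw [_root_.zpow_add, zpow_one]; group
end

section
include hc hec hfe hlc hzc he3
theorem wrd_mulE (k a b : ℤ) (s : Bool) (t : ℤ) :
    e * wrd e l c z f k a b s t =
      wrd e l c z f k (-b) (a - b) s (t + cond s 2 1) := by
  unfold wrd
  have h1 : e * z ^ k = z ^ k * e := ((hzc e).zpow_left k).eq.symm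
  have h2 : c ^ a * (l ^ (-b) * c ^ (-b)) = l ^ (-b) * c ^ (a - b) := by
    rw [← mul_assoc, ((hlc.symm).zpow_zpow a (-b)).eq, mul_assoc, ← _root_.zpow_add, ← sub_eq_add_neg]
  have h3 : e * (cond s f 1) * e ^ t = (cond s f 1) * e ^ (t + cond s 2 1) := by
    cases s
    · simp [_root_.zpow_add]; group
    · simp only [cond]
      have : e * f = f * e ^ 2 := by
        have h4 : f * e ^ 2 * f⁻¹ = e := by
          rw [← _root_.conj_pow, hfe, ← _root_.pow_mul]
          norm_num
          rw [show (4:ℕ) = 3 + 1 by norm_num, pow_add, he3, one_mul, pow_one]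
        calc e * f = (f * e ^ 2 * f⁻¹) * f := by rw [h4]
          _ = f * e ^ 2 := by group
      rw [this, _root_.zpow_add]
      norm_num
      group
  calc e * (z ^ k * l ^ a * c ^ b * (cond s f 1) * e ^ t)
      = (e * z ^ k) * (l ^ a * c ^ b * (cond s f 1) * e ^ t) := by group
    _ = z ^ k * ((e * l ^ a) * c ^ b * (cond s f 1) * e ^ t) := by rw [h1]; group
    _ = z ^ k * (c ^ a * ((e * c ^ b) * ((cond s f 1) * e ^ t))) := by
        rw [wrd_el hc]; group
    _ = z ^ k * (c ^ a * (l ^ (-b) * c ^ (-b) * (e * (cond s f 1) * e ^ t))) := by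
        rw [wrd_ec hec hlc]; group
    _ = z ^ k * ((c ^ a * (l ^ (-b) * c ^ (-b))) * ((cond s f 1) * e ^ (t + cond s 2 1))) := by
        rw [h3]; group
    _ = z ^ k * l ^ (-b) * c ^ (a - b) * (cond s f 1) * e ^ (t + cond s 2 1) := by
        rw [← mul_assoc, h2]; group
end

section
include hfl hfc hz hzc hlc
theorem wrd_mulF (k a b : ℤ) (s : Bool) (t : ℤ) :
    f * wrd e l c z f k a b s t =
      cond s (wrd e l c z f (k + 1) (-b) (-a) false t) (wrd e l c z f k (-b) (-a) true t) := by
  unfold wrd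
  have h1 : f * z ^ k = z ^ k * f := ((hzc f).zpow_left k).eq.symm
  have h2 : c ^ (-a) * l ^ (-b) = l ^ (-b) * c ^ (-a) := ((hlc.symm).zpow_zpow (-a) (-b)).eq
  have hcore : f * (z ^ k * l ^ a * c ^ b) = z ^ k * l ^ (-b) * c ^ (-a) * f := by
    calc f * (z ^ k * l ^ a * c ^ b)
        = (f * z ^ k) * (l ^ a * c ^ b) := by group
      _ = z ^ k * ((f * l ^ a) * c ^ b) := by rw [h1]; group
      _ = z ^ k * (c ^ (-a) * (f * c ^ b)) := by rw [wrd_fl hfl]; group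
      _ = z ^ k * ((c ^ (-a) * l ^ (-b)) * f) := by rw [wrd_fc hfc]; group
      _ = z ^ k * l ^ (-b) * c ^ (-a) * f := by rw [h2]; group
  cases s
  · simp only [cond]
    calc f * (z ^ k * l ^ a * c ^ b * 1 * e ^ t)
        = (f * (z ^ k * l ^ a * c ^ b)) * e ^ t := by group
      _ = z ^ k * l ^ (-b) * c ^ (-a) * f * e ^ t := by rw [hcore]
  · simp only [cond]
    have h3 : f * f = z ^ (1:ℤ) := by rw [zpow_one, hz]
    calc f * (z ^ k * l ^ a * c ^ b * f * e ^ t)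
        = (f * (z ^ k * l ^ a * c ^ b)) * (f * e ^ t) := by group
      _ = z ^ k * l ^ (-b) * c ^ (-a) * (f * f) * e ^ t := by rw [hcore]; group
      _ = z ^ k * l ^ (-b) * c ^ (-a) * z ^ (1:ℤ) * e ^ t := by rw [h3]
      _ = z ^ (k+1) * l ^ (-b) * c ^ (-a) * 1 * e ^ t := by
          rw [_root_.zpow_add]
          have := ((hzc (l ^ (-b) * c ^ (-a))).zpow_left 1).eq
          calc z ^ k * l ^ (-b) * c ^ (-a) * z ^ (1:ℤ) * e ^ t
              = z ^ k * ((l ^ (-b) * c ^ (-a)) * z ^ (1:ℤ)) * e ^ t := by group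
            _ = z ^ k * (z ^ (1:ℤ) * (l ^ (-b) * c ^ (-a))) * e ^ t := by rw [← this]
            _ = z ^ k * z ^ (1:ℤ) * l ^ (-b) * c ^ (-a) * 1 * e ^ t := by group
end
end Abstract2

section Abstract3
variable {G : Type*} [Group G]

theorem zpow_emod' (g : G) {m : ℕ} (hg : g ^ m = 1) (x : ℤ) :
    g ^ x = g ^ (x % (m : ℤ)) := by
  conv_lhs => rw [← Int.emod_add_mul_ediv x m]
  rw [_root_.zpow_add, _root_.zpow_mul, _root_.zpow_natCast, hg, _root_.one_zpow, mul_one]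

def Sset (e l c z f : G) : Set G :=
  {g | ∃ k a b : ℤ, ∃ s : Bool, ∃ t : ℤ, g = wrd e l c z f k a b s t}

variable {e l c z f : G}
variable (hc : c = e * l * e⁻¹) (hec : e * c * e⁻¹ = c⁻¹ * l⁻¹)
  (hfl : f * l * f⁻¹ = c⁻¹) (hfc : f * c * f⁻¹ = l⁻¹) (hfe : f * e * f⁻¹ = e ^ 2)
  (hz : z = f * f) (hzc : ∀ g : G, Commute z g) (hlc : Commute l c) (he3 : e ^ 3 = 1)

include hc hec hfl hfc hfe hz hzc hlc he3

theorem closure_eq_Sset (hfin : (Sset e l c z f).Finite) :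
    (Subgroup.closure ({e, l, f} : Set G) : Set G) = Sset e l c z f := by
  apply Set.Subset.antisymm
  · -- closure ⊆ Sset
    have hstep : ∀ g ∈ ({e, l, f} : Set G), ∀ x ∈ Sset e l c z f,
        g * x ∈ Sset e l c z f := by
      rintro g hg x ⟨k, a, b, s, t, rfl⟩
      rcases hg with rfl | rfl | rfl
      · exact ⟨k, -b, a - b, s, t + cond s 2 1, wrd_mulE hc hec hfe hzc hlc he3 k a b s t⟩
      · exact ⟨k, a + 1, b, s, t, wrd_mulL hzc k a b s t⟩
      · cases s
        · exact ⟨k, -b, -a, true, t, wrd_mulF hfl hfc hz hzc hlc k a b false t⟩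
        · exact ⟨k + 1, -b, -a, false, t, wrd_mulF hfl hfc hz hzc hlc k a b true t⟩
    have himg : ∀ g ∈ ({e, l, f} : Set G),
        (fun x => g * x) '' Sset e l c z f = Sset e l c z f := by
      intro g hg
      apply Set.eq_of_subset_of_ncard_le
      · rintro _ ⟨x, hx, rfl⟩; exact hstep g hg x hx
      · rw [Set.ncard_image_of_injective _ (mul_right_injective g)]
      · exact hfin
    intro g hg
    have key : (fun x => g * x) '' Sset e l c z f = Sset e l c z f := by
      induction hg using Subgroup.closure_induction with
      | mem x hx => exact himg x hx
      | one => simp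
      | mul x y hx hy px py =>
          rw [show (fun w => x * y * w) = (fun w => x * w) ∘ (fun w => y * w) by
            funext w; simp [mul_assoc], Set.image_comp, py, px]
      | inv x hx px =>
          conv_lhs => rw [← px]
          rw [← Set.image_comp]
          convert Set.image_id _
          funext w; simp
    have h1 : (1 : G) ∈ Sset e l c z f := ⟨0, 0, 0, false, 0, by simp [wrd]⟩
    have : g * 1 ∈ (fun x => g * x) '' Sset e l c z f := ⟨1, h1, rfl⟩
    rw [key] at this
    simpa using this
  · -- Sset ⊆ closure
    rintro g ⟨k, a, b, s, t, rfl⟩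
    have he : e ∈ Subgroup.closure ({e, l, f} : Set G) :=
      Subgroup.subset_closure (by simp)
    have hl : l ∈ Subgroup.closure ({e, l, f} : Set G) :=
      Subgroup.subset_closure (by simp)
    have hf : f ∈ Subgroup.closure ({e, l, f} : Set G) :=
      Subgroup.subset_closure (by simp)
    have hcm : c ∈ Subgroup.closure ({e, l, f} : Set G) := by
      rw [hc]; exact mul_mem (mul_mem he hl) (inv_mem he)
    have hzm : z ∈ Subgroup.closure ({e, l, f} : Set G) := by
      rw [hz]; exact mul_mem hf hf
    refine mul_mem (mul_mem (mul_mem (mul_mem ?_ ?_) ?_) ?_) ?_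
    · exact zpow_mem hzm k
    · exact zpow_mem hl a
    · exact zpow_mem hcm b
    · cases s
      · exact one_mem _
      · exact hf
    · exact zpow_mem he t

end Abstract3

/-- the root of unity exp(2πi/N) -/
noncomputable def rou (N : ℕ) : ℂ := Complex.exp (2 * (Real.pi : ℂ) * Complex.I / (N : ℂ))

noncomputable def Qmat : Matrix (Fin 3) (Fin 3) ℂ := !![0, 0, 1; 0, 1, 0; 1, 0, 0]

theorem rou_ne_zero (N : ℕ) : rou N ≠ 0 := Complex.exp_ne_zero _

theorem rou_pow (N : ℕ) (m : ℕ) :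
    rou N ^ m = Complex.exp ((m : ℂ) * (2 * (Real.pi : ℂ) * Complex.I / (N : ℂ))) := by
  rw [rou, ← Complex.exp_nat_mul]

theorem rou_pow_self (N : ℕ) (hN : N ≠ 0) : rou N ^ N = 1 := by
  have hNc : (N : ℂ) ≠ 0 := by exact_mod_cast hN
  have : (N : ℂ) * (2 * (Real.pi : ℂ) * Complex.I / (N : ℂ)) =
      2 * (Real.pi : ℂ) * Complex.I := by field_simp
  rw [rou_pow, this, Complex.exp_two_pi_mul_I]

theorem rou_dvd_of_pow_eq {N : ℕ} (hN : 0 < N) {m m' : ℕ}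
    (h : rou N ^ m = rou N ^ m') : (N : ℤ) ∣ (m : ℤ) - (m' : ℤ) := by
  rw [rou_pow, rou_pow, Complex.exp_eq_exp_iff_exists_int] at h
  obtain ⟨q, hq⟩ := h
  have hNc : (N : ℂ) ≠ 0 := by exact_mod_cast hN.ne'
  have hpi : (2 * (Real.pi : ℂ) * Complex.I) ≠ 0 := by
    simp [Real.pi_ne_zero, Complex.I_ne_zero, Complex.ofReal_ne_zero]
  have hc : ((m : ℤ) - m' - q * N : ℤ) = 0 := by
    have hC : (((m : ℤ) - m' - q * N : ℤ) : ℂ) = 0 := by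
      push_cast
      have h2 : ((m:ℂ) - m' - q*N) * (2 * (Real.pi:ℂ) * Complex.I / N) = 0 := by
        field_simp at hq
        rw [show ((m:ℂ) - m' - q*N) = 0 by linear_combination hq, zero_mul]
      rcases mul_eq_zero.mp h2 with h3 | h3
      · exact h3
      · exact absurd h3 (div_ne_zero hpi hNc)
    exact_mod_cast hC
  exact ⟨q, by linarith⟩

theorem Em0 : Ematrix ^ (0:ℕ) = !![1,0,0;0,1,0;0,0,1] := by
  rw [pow_zero]; ext i j; fin_cases i <;> fin_cases j <;>
    simp [Matrix.one_apply, Matrix.vecHead, Matrix.vecTail]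

theorem Em1 : Ematrix ^ (1:ℕ) = !![0,1,0;0,0,1;1,0,0] := by rw [pow_one, Ematrix]

theorem Em2 : Ematrix ^ (2:ℕ) = !![0,0,1;1,0,0;0,1,0] := by
  rw [pow_two, Ematrix]; ext i j; fin_cases i <;> fin_cases j <;>
    simp [Matrix.mul_apply, Fin.sum_univ_three, Matrix.vecHead, Matrix.vecTail]

theorem Id3 : (1 : Matrix (Fin 3) (Fin 3) ℂ) = !![1,0,0;0,1,0;0,0,1] := by
  ext i j; fin_cases i <;> fin_cases j <;>
    simp [Matrix.one_apply, Matrix.vecHead, Matrix.vecTail]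

theorem inj_core {n j : ℕ} (hn : 0 < n) (hj : 0 < j)
    {k k' a a' b b' c : ℕ}
    (hk : k < 2 ^ (j-1)) (hk' : k' < 2 ^ (j-1)) (ha : a < n) (ha' : a' < n)
    (hb : b < n) (hb' : b' < n)
    (h0 : rou (2^j) ^ (2*k + c) * rou n ^ b = rou (2^j) ^ (2*k' + c) * rou n ^ b')
    (h1 : rou (2^j) ^ (2*k + c) * (rou n ^ a * (rou n ^ b)⁻¹)
        = rou (2^j) ^ (2*k' + c) * (rou n ^ a' * (rou n ^ b')⁻¹))
    (h2 : rou (2^j) ^ (2*k + c) * (rou n ^ a)⁻¹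
        = rou (2^j) ^ (2*k' + c) * (rou n ^ a')⁻¹) :
    k = k' ∧ a = a' ∧ b = b' := by
  have hξ : rou (2^j) ≠ 0 := rou_ne_zero _
  have hν : rou n ≠ 0 := rou_ne_zero _
  have hh : (rou (2^j) ^ (2*k + c))^3 = (rou (2^j) ^ (2*k' + c))^3 := by
    have hm := congrArg₂ (· * ·) (congrArg₂ (· * ·) h0 h1) h2
    have e : ∀ (X p q : ℂ), p ≠ 0 → q ≠ 0 → X * p * (X * (q * p⁻¹)) * (X * q⁻¹) = X ^ 3 := by
      intro X p q hp hq
      rw [show X * p * (X * (q * p⁻¹)) * (X * q⁻¹) = X ^ 3 * (p * p⁻¹) * (q * q⁻¹) by ring,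
        mul_inv_cancel₀ hp, mul_inv_cancel₀ hq, mul_one, mul_one]
    exact (e _ _ _ (pow_ne_zero _ hν) (pow_ne_zero _ hν)).symm.trans
      (hm.trans (e _ _ _ (pow_ne_zero _ hν) (pow_ne_zero _ hν)))
  have key : rou (2^j) ^ ((2*k + c)*3) = rou (2^j) ^ ((2*k' + c)*3) := by
    rw [pow_mul, pow_mul]; exact hh
  have hdvd := rou_dvd_of_pow_eq (by positivity) key
  have h2j : ((2^j : ℕ) : ℤ) = 2 * 2^(j-1) := by
    push_cast
    conv_lhs => rw [show j = 1 + (j - 1) by omega]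
    rw [pow_add, pow_one]
  rw [h2j] at hdvd
  obtain ⟨m, hm⟩ := hdvd
  have hm3 : 3 * ((k:ℤ) - k') = 2^(j-1) * m := by
    have h6 : 2 * (3 * ((k:ℤ) - k')) = 2 * (2^(j-1) * m) := by push_cast at hm ⊢; linarith
    exact mul_left_cancel₀ (by norm_num) h6
  have hcop : IsCoprime ((2:ℤ)^(j-1)) 3 := by
    apply IsCoprime.pow_left
    rw [Int.isCoprime_iff_gcd_eq_one]
    norm_num
  have hdvdk : ((2:ℤ)^(j-1)) ∣ ((k:ℤ) - k') := by
    have : ((2:ℤ)^(j-1)) ∣ ((k:ℤ) - k') * 3 := ⟨m, by linarith⟩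
    exact hcop.dvd_of_dvd_mul_right this
  have hkk : (k:ℤ) - k' = 0 := by
    apply Int.eq_zero_of_abs_lt_dvd hdvdk
    have b1 : (k:ℤ) < 2^(j-1) := by exact_mod_cast hk
    have b2 : (k':ℤ) < 2^(j-1) := by exact_mod_cast hk'
    rw [abs_lt]; omega
  have hkeq : k = k' := by omega
  subst hkeq
  have hbb : rou n ^ b = rou n ^ b' := mul_left_cancel₀ (pow_ne_zero _ hξ) h0
  have haa : rou n ^ a = rou n ^ a' := by
    have := mul_left_cancel₀ (pow_ne_zero _ hξ) h2
    exact inv_injective this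
  have hbdvd := rou_dvd_of_pow_eq hn hbb
  have hadvd := rou_dvd_of_pow_eq hn haa
  obtain ⟨mb, hmb⟩ := hbdvd
  obtain ⟨ma, hma⟩ := hadvd
  have hbn : (b:ℤ) < n := by exact_mod_cast hb
  have hbn' : (b':ℤ) < n := by exact_mod_cast hb'
  have han : (a:ℤ) < n := by exact_mod_cast ha
  have han' : (a':ℤ) < n := by exact_mod_cast ha'
  have hnn : (0:ℤ) < n := by exact_mod_cast hn
  refine ⟨rfl, ?_, ?_⟩
  · have h0' : (a:ℤ) - a' = 0 :=
      Int.eq_zero_of_abs_lt_dvd ⟨ma, hma⟩ (by rw [abs_lt]; omega)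
    omega
  · have h0' : (b:ℤ) - b' = 0 :=
      Int.eq_zero_of_abs_lt_dvd ⟨mb, hmb⟩ (by rw [abs_lt]; omega)
    omega

theorem diag3 (x y z : ℂ) :
    diagonal ![x, y, z] = !![x, 0, 0; 0, y, 0; 0, 0, z] := by
  ext i j; fin_cases i <;> fin_cases j <;>
    simp [Matrix.diagonal_apply, Matrix.vecHead, Matrix.vecTail]

section Concrete

variable {n j : ℕ} {E L F : GL (Fin 3) ℂ}
variable (hn : 2 ≤ n) (hj : 0 < j)
variable (hE : E.val = Ematrix) (hL : L.val = Lmatrix n) (hF : F.val = -(Fmatrix 0 j))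

theorem hLval (hL : L.val = Lmatrix n) :
    L.val = diagonal ![1, rou n, (rou n)⁻¹] := hL

theorem hFval (hF : F.val = -(Fmatrix 0 j)) : F.val = rou (2 ^ j) • Qmat := by
  rw [hF, Fmatrix, neg_smul, neg_neg, rou]
  congr 2
  push_cast
  norm_num

include hE

theorem gEEE : E * E * E = 1 := by
  apply Units.ext
  simp only [Units.val_mul, hE, Units.val_one]
  ext i j; fin_cases i <;> fin_cases j <;>
    simp [Ematrix, Matrix.mul_apply, Fin.sum_univ_three, Matrix.one_apply,
      Matrix.vecHead, Matrix.vecTail]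

theorem gE3 : E ^ 3 = 1 := by
  rw [pow_succ, pow_succ, pow_one, gEEE hE]

theorem gEinv : E⁻¹ = E * E := by
  have h := gEEE hE
  calc E⁻¹ = E⁻¹ * (E * E * E) := by rw [h, mul_one]
    _ = E * E := by group

include hL

theorem gCval : (E * L * E⁻¹).val = diagonal ![rou n, (rou n)⁻¹, 1] := by
  rw [gEinv hE]
  show E.val * L.val * (E.val * E.val) = _
  rw [hE, hLval hL, diag3, diag3]
  ext i j; fin_cases i <;> fin_cases j <;>
    simp [Ematrix, Matrix.mul_apply, Fin.sum_univ_three, Matrix.vecHead, Matrix.vecTail]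

theorem glc : Commute L (E * L * E⁻¹) := by
  have : L.val * (E * L * E⁻¹).val = (E * L * E⁻¹).val * L.val := by
    rw [gCval hE hL, hLval hL, diag3, diag3]
    ext i j; fin_cases i <;> fin_cases j <;>
      simp [Matrix.mul_apply, Fin.sum_univ_three, Matrix.vecHead, Matrix.vecTail, mul_comm]
  exact Units.ext this

theorem gec : E * (E * L * E⁻¹) * E⁻¹ = (E * L * E⁻¹)⁻¹ * L⁻¹ := by
  have key : L * (E * L * E⁻¹) * (E * (E * L * E⁻¹) * E⁻¹) = 1 := by
    have hC := gCval hE hL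
    apply Units.ext
    rw [gEinv hE] 
    simp only [Units.val_mul, Units.val_one]
    rw [show E.val * L.val * (E.val * E.val) = ((E * L * (E * E)).val) by simp [Units.val_mul]]
    rw [show (E * L * (E * E)) = E * L * E⁻¹ by rw [gEinv hE], hC]
    rw [hLval hL, hE, diag3, diag3]
    ext i j; fin_cases i <;> fin_cases j <;>
      simp [Ematrix, Matrix.mul_apply, Fin.sum_univ_three, Matrix.one_apply,
        Matrix.vecHead, Matrix.vecTail, mul_comm, rou_ne_zero]
  calc E * (E * L * E⁻¹) * E⁻¹
      = (L * (E * L * E⁻¹))⁻¹ * (L * (E * L * E⁻¹) * (E * (E * L * E⁻¹) * E⁻¹)) := by group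
    _ = (L * (E * L * E⁻¹))⁻¹ := by rw [key, mul_one]
    _ = (E * L * E⁻¹)⁻¹ * L⁻¹ := by rw [_root_.mul_inv_rev]

include hF

theorem gfl : F * L * F⁻¹ = (E * L * E⁻¹)⁻¹ := by
  have key : (E * L * E⁻¹) * (F * L) = F := by
    apply Units.ext
    show (E * L * E⁻¹).val * (F.val * L.val) = F.val
    rw [gCval hE hL, hLval hL, hFval hF, diag3, diag3]
    ext i j; fin_cases i <;> fin_cases j <;>
      simp [Qmat, Matrix.mul_apply, Fin.sum_univ_three, Matrix.smul_apply,
        Matrix.vecHead, Matrix.vecTail, rou_ne_zero, mul_comm]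
  calc F * L * F⁻¹ = (E * L * E⁻¹)⁻¹ * ((E * L * E⁻¹) * (F * L)) * F⁻¹ := by group
    _ = (E * L * E⁻¹)⁻¹ * F * F⁻¹ := by rw [key]
    _ = (E * L * E⁻¹)⁻¹ := by group

theorem gfc : F * (E * L * E⁻¹) * F⁻¹ = L⁻¹ := by
  have key : L * (F * (E * L * E⁻¹)) = F := by
    apply Units.ext
    show L.val * (F.val * (E * L * E⁻¹).val) = F.val
    rw [gCval hE hL, hLval hL, hFval hF, diag3, diag3]
    ext i j; fin_cases i <;> fin_cases j <;>
      simp [Qmat, Matrix.mul_apply, Fin.sum_univ_three, Matrix.smul_apply,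
        Matrix.vecHead, Matrix.vecTail, rou_ne_zero, mul_comm]
  calc F * (E * L * E⁻¹) * F⁻¹ = L⁻¹ * (L * (F * (E * L * E⁻¹))) * F⁻¹ := by group
    _ = L⁻¹ * F * F⁻¹ := by rw [key]
    _ = L⁻¹ := by group

omit hL

theorem gfe : F * E * F⁻¹ = E ^ 2 := by
  have key : F * E = E ^ 2 * F := by
    apply Units.ext
    simp only [Units.val_mul, Units.val_pow_eq_pow_val]
    rw [hFval hF, hE, pow_two]
    ext i j; fin_cases i <;> fin_cases j <;>
      simp [Qmat, Ematrix, Matrix.mul_apply, Fin.sum_univ_three, Matrix.smul_apply,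
        Matrix.vecHead, Matrix.vecTail]
  calc F * E * F⁻¹ = (E ^ 2 * F) * F⁻¹ := by rw [key]
    _ = E ^ 2 := by group

omit hE

omit hF in
theorem QQ1 : Qmat * Qmat = 1 := by
  ext i j; fin_cases i <;> fin_cases j <;>
    simp [Qmat, Matrix.mul_apply, Fin.sum_univ_three, Matrix.one_apply,
      Matrix.vecHead, Matrix.vecTail]

theorem gZval : (F * F).val = (rou (2 ^ j)) ^ 2 • (1 : Matrix (Fin 3) (Fin 3) ℂ) := by
  show F.val * F.val = _
  rw [hFval hF, smul_mul_smul_comm, QQ1, pow_two]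

theorem gzc : ∀ g : GL (Fin 3) ℂ, Commute (F * F) g := by
  intro g
  apply Units.ext
  simp only [Units.val_mul, gZval hF]
  rw [Matrix.smul_mul, Matrix.mul_smul, Matrix.one_mul, Matrix.mul_one]

theorem gZN (hj : 0 < j) : (F * F) ^ 2 ^ (j - 1) = 1 := by
  apply Units.ext
  rw [Units.val_pow_eq_pow_val, gZval hF, Units.val_one]
  have h2 : 2 * 2 ^ (j - 1) = 2 ^ j := by
    conv_rhs => rw [show j = 1 + (j - 1) by omega]
    rw [pow_add, pow_one]
  rw [smul_pow, one_pow, ← pow_mul, h2,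
    rou_pow_self _ (by positivity), one_smul]

include hn hL

omit hF in
theorem gLn : L ^ n = 1 := by
  apply Units.ext
  rw [Units.val_pow_eq_pow_val, hLval hL, Units.val_one, Matrix.diagonal_pow]
  have hv : ![1, rou n, (rou n)⁻¹] ^ n = ![1, 1, 1] := by
    funext i; fin_cases i <;>
      simp [inv_pow, rou_pow_self n (by omega), Matrix.vecHead, Matrix.vecTail]
  rw [hv]
  ext i j; fin_cases i <;> fin_cases j <;>
    simp [Matrix.diagonal_apply, Matrix.one_apply, Matrix.vecHead, Matrix.vecTail]

include hE

omit hF in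
theorem gCn : (E * L * E⁻¹) ^ n = 1 := by
  rw [conj_pow, gLn hn hL]
  group

omit hn in
theorem wrd_val (k a b t : ℕ) (s : Bool) :
    (wrd E L (E * L * E⁻¹) (F * F) F (k : ℤ) (a : ℤ) (b : ℤ) s (t : ℤ)).val =
      (rou (2 ^ j) ^ (2 * k + cond s 1 0)) •
        (diagonal ![rou n ^ b, rou n ^ a * (rou n ^ b)⁻¹, (rou n ^ a)⁻¹] *
          ((cond s Qmat 1) * Ematrix ^ t)) := by
  have hCv : (E * L * E⁻¹).val = diagonal ![rou n, (rou n)⁻¹, 1] := gCval hE hL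
  have hZv : (F * F).val = (rou (2 ^ j)) ^ 2 • (1 : Matrix (Fin 3) (Fin 3) ℂ) :=
    gZval hF
  unfold wrd
  rw [zpow_natCast, zpow_natCast, zpow_natCast, zpow_natCast]
  set Cu := E * L * E⁻¹ with hCu
  set Zu := F * F with hZu
  simp only [Units.val_mul, Units.val_pow_eq_pow_val]
  rw [hCv, hZv, hLval hL, hE]
  rw [Matrix.diagonal_pow, Matrix.diagonal_pow]
  have hv1 : ![1, rou n, (rou n)⁻¹] ^ a = ![1, rou n ^ a, (rou n ^ a)⁻¹] := by
    funext i; fin_cases i <;> simp [inv_pow, Matrix.vecHead, Matrix.vecTail]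
  have hv2 : ![rou n, (rou n)⁻¹, 1] ^ b = ![rou n ^ b, (rou n ^ b)⁻¹, 1] := by
    funext i; fin_cases i <;> simp [inv_pow, Matrix.vecHead, Matrix.vecTail]
  have hd : diagonal (![1, rou n, (rou n)⁻¹] ^ a) * diagonal (![rou n, (rou n)⁻¹, 1] ^ b)
      = diagonal ![rou n ^ b, rou n ^ a * (rou n ^ b)⁻¹, (rou n ^ a)⁻¹] := by
    rw [hv1, hv2, Matrix.diagonal_mul_diagonal]
    ext i jj; fin_cases i <;> fin_cases jj <;>
      simp [Matrix.diagonal_apply, Matrix.vecHead, Matrix.vecTail]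
  have hsc : ((rou (2 ^ j)) ^ 2 • (1 : Matrix (Fin 3) (Fin 3) ℂ)) ^ k
      = (rou (2 ^ j)) ^ (2 * k) • (1 : Matrix (Fin 3) (Fin 3) ℂ) := by
    rw [smul_pow, one_pow, ← pow_mul]
  rw [hsc]
  rw [show ∀ (X Y : Matrix (Fin 3) (Fin 3) ℂ), (rou (2 ^ j)) ^ (2*k) • (1 : Matrix (Fin 3) (Fin 3) ℂ) * X * Y = (rou (2 ^ j)) ^ (2*k) • (X * Y) from by
    intro X Y; rw [Matrix.smul_mul, Matrix.smul_mul, Matrix.one_mul]]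
  rw [hd]
  cases s
  · simp only [cond, Units.val_one, add_zero, pow_zero]
    rw [Matrix.mul_one, Matrix.one_mul, Matrix.smul_mul]
  · simp only [cond]
    rw [hFval hF]
    rw [pow_add, pow_one]
    simp [Matrix.smul_mul, Matrix.mul_smul, smul_smul, Matrix.mul_assoc, pow_succ, mul_comm]

omit hn in
set_option maxHeartbeats 3200000 in
theorem Phi_inj (hn0 : 0 < n) (hj : 0 < j) :
    Function.Injective (fun x : Fin (2^(j-1)) × Fin n × Fin n × Bool × Fin 3 =>
      wrd E L (E*L*E⁻¹) (F*F) F (x.1.val : ℤ) (x.2.1.val : ℤ) (x.2.2.1.val : ℤ)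
        x.2.2.2.1 (x.2.2.2.2.val : ℤ)) := by
  intro x y h
  obtain ⟨k, a, b, s, t⟩ := x
  obtain ⟨k', a', b', s', t'⟩ := y
  simp only at h
  have hv := congrArg Units.val h
  rw [wrd_val hE hL hF k.val a.val b.val t.val s,
    wrd_val hE hL hF k'.val a'.val b'.val t'.val s'] at hv
  fin_cases t <;> fin_cases t' <;> cases s <;> cases s' <;>
    simp only [Bool.cond_false, Bool.cond_true, Fin.isValue, Fin.val_zero, Fin.val_one,
      Fin.val_two, Em0, Em1, Em2, Id3, Qmat, diag3, Matrix.mul_fin_three,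
      Matrix.smul_of, Matrix.smul_cons, Matrix.smul_empty, smul_eq_mul,
      mul_zero, mul_one, zero_mul, one_mul, add_zero, zero_add] at hv <;>
  first
  | (exfalso
     have h00 := congrFun (congrFun hv 0) 0
     have h01 := congrFun (congrFun hv 0) 1
     have h02 := congrFun (congrFun hv 0) 2
     have h10 := congrFun (congrFun hv 1) 0
     have h11 := congrFun (congrFun hv 1) 1
     have h12 := congrFun (congrFun hv 1) 2
     have h20 := congrFun (congrFun hv 2) 0
     have h21 := congrFun (congrFun hv 2) 1
     have h22 := congrFun (congrFun hv 2) 2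
     simp only [Matrix.cons_val_zero, Matrix.cons_val_one, Matrix.head_cons,
       Matrix.cons_val_two, Matrix.tail_cons, Matrix.of_apply] at h00 h01 h02 h10 h11 h12 h20 h21 h22
     simp_all [mul_eq_zero, pow_eq_zero_iff, inv_eq_zero, rou_ne_zero]
     done)
  | (have hr0 := congrArg (fun M : Matrix (Fin 3) (Fin 3) ℂ => M 0 0 + M 0 1 + M 0 2) hv
     have hr1 := congrArg (fun M : Matrix (Fin 3) (Fin 3) ℂ => M 1 0 + M 1 1 + M 1 2) hv
     have hr2 := congrArg (fun M : Matrix (Fin 3) (Fin 3) ℂ => M 2 0 + M 2 1 + M 2 2) hv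
     simp only [Matrix.cons_val_zero, Matrix.cons_val_one, Matrix.head_cons,
       Matrix.cons_val_two, Matrix.tail_cons, Matrix.of_apply, add_zero, zero_add] at hr0 hr1 hr2
     have ee : k.val = k'.val ∧ a.val = a'.val ∧ b.val = b'.val := by
       first
       | exact inj_core (c := 0) hn0 hj k.isLt k'.isLt a.isLt a'.isLt b.isLt b'.isLt hr0 hr1 hr2
       | exact inj_core (c := 1) hn0 hj k.isLt k'.isLt a.isLt a'.isLt b.isLt b'.isLt hr0 hr1 hr2
     obtain ⟨e1, e2, e3⟩ := ee
     simp only [Prod.mk.injEq]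
     exact ⟨Fin.ext e1, Fin.ext e2, Fin.ext e3, trivial⟩)

end Concrete

/-- The group `Δ(6n², j)`, generated by `E`, `L_n` and `−F_{0,j}` inside `GL(3,ℂ)`,
has order `3·2^j·n²`. -/
theorem delta_6n2j_order (n : ℕ) (hn : 2 ≤ n) (hn3 : ¬ 3 ∣ n)
    (j : ℕ) (hj : 0 < j)
    (E L F : GL (Fin 3) ℂ)
    (hE : E.val = Ematrix) (hL : L.val = Lmatrix n) (hF : F.val = -(Fmatrix 0 j)) :
    Nat.card ↥(Subgroup.closure ({E, L, F} : Set (GL (Fin 3) ℂ)))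
      = 3 * 2 ^ j * n ^ 2 := by
  have hn0 : 0 < n := by omega
  have hc : E * L * E⁻¹ = E * L * E⁻¹ := rfl
  have hec := gec hE hL
  have hfl := gfl hE hL hF
  have hfc := gfc hE hL hF
  have hfe := gfe hE hF
  have hzc := gzc hF
  have hlc := glc hE hL
  have he3 := gE3 hE
  have hZN := gZN hF hj
  have hLn := gLn hn hL
  have hCn := gCn hn hE hL
  set Φ : Fin (2^(j-1)) × Fin n × Fin n × Bool × Fin 3 → GL (Fin 3) ℂ :=
    fun x => wrd E L (E*L*E⁻¹) (F*F) F (x.1.val : ℤ) (x.2.1.val : ℤ) (x.2.2.1.val : ℤ)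
        x.2.2.2.1 (x.2.2.2.2.val : ℤ) with hΦ
  have hMpos : 0 < 2^(j-1) := Nat.pow_pos (by norm_num)
  have hSrange : Sset E L (E*L*E⁻¹) (F*F) F = Set.range Φ := by
    apply Set.Subset.antisymm
    · rintro g ⟨k, a, b, s, t, rfl⟩
      have hkb : (k % ((2^(j-1) : ℕ) : ℤ)).toNat < 2^(j-1) := by
        have h1 : 0 ≤ k % ((2^(j-1) : ℕ) : ℤ) := Int.emod_nonneg k (by exact_mod_cast hMpos.ne')
        have h2 : k % ((2^(j-1) : ℕ) : ℤ) < ((2^(j-1) : ℕ) : ℤ) :=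
          Int.emod_lt_of_pos k (by exact_mod_cast hMpos)
        omega
      have hab : (a % ((n : ℕ) : ℤ)).toNat < n := by
        have h1 : 0 ≤ a % ((n : ℕ) : ℤ) := Int.emod_nonneg a (by exact_mod_cast hn0.ne')
        have h2 : a % ((n : ℕ) : ℤ) < ((n : ℕ) : ℤ) := Int.emod_lt_of_pos a (by exact_mod_cast hn0)
        omega
      have hbb : (b % ((n : ℕ) : ℤ)).toNat < n := by
        have h1 : 0 ≤ b % ((n : ℕ) : ℤ) := Int.emod_nonneg b (by exact_mod_cast hn0.ne')
        have h2 : b % ((n : ℕ) : ℤ) < ((n : ℕ) : ℤ) := Int.emod_lt_of_pos b (by exact_mod_cast hn0)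
        omega
      have htb : (t % ((3 : ℕ) : ℤ)).toNat < 3 := by
        have h1 : 0 ≤ t % ((3 : ℕ) : ℤ) := Int.emod_nonneg t (by norm_num)
        have h2 : t % ((3 : ℕ) : ℤ) < ((3 : ℕ) : ℤ) := Int.emod_lt_of_pos t (by norm_num)
        omega
      refine ⟨(⟨(k % ((2^(j-1) : ℕ) : ℤ)).toNat, hkb⟩, ⟨(a % ((n : ℕ) : ℤ)).toNat, hab⟩,
        ⟨(b % ((n : ℕ) : ℤ)).toNat, hbb⟩, s, ⟨(t % ((3 : ℕ) : ℤ)).toNat, htb⟩), ?_⟩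
      show wrd E L (E*L*E⁻¹) (F*F) F _ _ _ s _ = wrd E L (E*L*E⁻¹) (F*F) F k a b s t
      rw [show (((k % ((2^(j-1) : ℕ) : ℤ)).toNat : ℕ) : ℤ) = k % ((2^(j-1) : ℕ) : ℤ) from
          Int.toNat_of_nonneg (Int.emod_nonneg k (by exact_mod_cast hMpos.ne')),
        show (((a % ((n : ℕ) : ℤ)).toNat : ℕ) : ℤ) = a % ((n : ℕ) : ℤ) from
          Int.toNat_of_nonneg (Int.emod_nonneg a (by exact_mod_cast hn0.ne')),
        show (((b % ((n : ℕ) : ℤ)).toNat : ℕ) : ℤ) = b % ((n : ℕ) : ℤ) from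
          Int.toNat_of_nonneg (Int.emod_nonneg b (by exact_mod_cast hn0.ne')),
        show (((t % ((3 : ℕ) : ℤ)).toNat : ℕ) : ℤ) = t % ((3 : ℕ) : ℤ) from
          Int.toNat_of_nonneg (Int.emod_nonneg t (by norm_num))]
      unfold wrd
      rw [← zpow_emod' (F*F) hZN k, ← zpow_emod' L hLn a, ← zpow_emod' (E*L*E⁻¹) hCn b,
        ← zpow_emod' E (show E ^ 3 = 1 from he3) t]
    · rintro g ⟨x, rfl⟩
      exact ⟨x.1.val, x.2.1.val, x.2.2.1.val, x.2.2.2.1, x.2.2.2.2.val, rfl⟩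
  have hfin : (Sset E L (E*L*E⁻¹) (F*F) F).Finite := by
    rw [hSrange]; exact Set.finite_range Φ
  have hclos : (Subgroup.closure ({E, L, F} : Set (GL (Fin 3) ℂ)) : Set (GL (Fin 3) ℂ))
      = Sset E L (E*L*E⁻¹) (F*F) F :=
    closure_eq_Sset hc hec hfl hfc hfe rfl hzc hlc he3 hfin
  have hmem : ∀ x : GL (Fin 3) ℂ,
      x ∈ Subgroup.closure ({E, L, F} : Set (GL (Fin 3) ℂ)) ↔ x ∈ Set.range Φ := by
    intro x
    rw [← hSrange, ← hclos]
    rfl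
  have hcard1 : Nat.card ↥(Subgroup.closure ({E, L, F} : Set (GL (Fin 3) ℂ)))
      = Nat.card ↥(Set.range Φ) :=
    Nat.card_congr (Equiv.subtypeEquivRight hmem)
  rw [hcard1, Nat.card_range_of_injective (Phi_inj hE hL hF hn0 hj)]
  rw [Nat.card_eq_fintype_card]
  simp only [Fintype.card_prod, Fintype.card_fin, Fintype.card_bool]
  have h2j : 2 ^ j = 2 * 2 ^ (j - 1) := by
    conv_lhs => rw [show j = 1 + (j - 1) by omega]
    rw [pow_add, pow_one]
  rw [h2j]
  ring
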